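/- Let 𝕊 satisfy: every n-ary operation (n ≥ 1) in its signature has a unit constant (substituting the unit into all but one argument yields that argument). Let 𝕋 satisfy: any 𝕋-term equal to a term with no variables has no variables, and 𝕋 has a constant e. If 𝕌 is a composite theory of 𝕊 and 𝕋, then for any 𝕊-term s with at least one free variable, substituting e for any one of its free variables (and arbitrary 𝕌-terms for the others) yields a 𝕌-term equal to e. -/

import Mathlib

/-! ### Algebraic theories, equational logic, and composite theories -/

structure Signature where
  Op : Type
  ar : Op → Nat

inductive Term (Sg : Signature) (V : Type) : Type
  | var : V → Term Sg V
  | op : (o : Sg.Op) → (Fin (Sg.ar o) → Term Sg V) → Term Sg V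

def Term.subst {Sg : Signature} {V W : Type} : Term Sg V → (V → Term Sg W) → Term Sg W
  | .var v, f => f v
  | .op o ts, f => .op o (fun i => (ts i).subst f)

/-- Renaming of variables. -/
def Term.rename {Sg : Signature} {V W : Type} (f : V → W) (t : Term Sg V) : Term Sg W :=
  t.subst (fun v => .var (f v))

/-- The set of free variables of a term. -/
def Term.fv {Sg : Signature} {V : Type} : Term Sg V → Set V
  | .var v => {v}
  | .op _ ts => ⋃ i, (ts i).fv

/-- An algebraic theory: a signature together with a set of equations (axioms),
given as pairs of terms over the variables ℕ. -/
structure Theory where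
  sig : Signature
  Ax : Term sig Nat → Term sig Nat → Prop

/-- Provable equality in equational logic over a theory. -/
inductive Theory.Eq (T : Theory) : {V : Type} → Term T.sig V → Term T.sig V → Prop
  | ax {V : Type} {s t : Term T.sig Nat} (h : T.Ax s t) (f : Nat → Term T.sig V) :
      Theory.Eq T (s.subst f) (t.subst f)
  | refl {V : Type} (t : Term T.sig V) : Theory.Eq T t t
  | symm {V : Type} {s t : Term T.sig V} : Theory.Eq T s t → Theory.Eq T t s
  | trans {V : Type} {s t u : Term T.sig V} :
      Theory.Eq T s t → Theory.Eq T t u → Theory.Eq T s u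
  | congr {V : Type} (o : T.sig.Op) {ts ts' : Fin (T.sig.ar o) → Term T.sig V}
      (h : ∀ i, Theory.Eq T (ts i) (ts' i)) : Theory.Eq T (.op o ts) (.op o ts')
  | subst {V W : Type} {s t : Term T.sig V} (f : V → Term T.sig W) :
      Theory.Eq T s t → Theory.Eq T (s.subst f) (t.subst f)

/-- Disjoint union of two signatures. -/
def Signature.sum (A B : Signature) : Signature := ⟨A.Op ⊕ B.Op, Sum.elim A.ar B.ar⟩

/-- Embedding of terms of the first theory into the sum signature. -/
def Term.inL {A B : Signature} {V : Type} : Term A V → Term (A.sum B) V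
  | .var v => .var v
  | .op o ts => .op (Sum.inl o) (fun i => (ts i).inL)

/-- Embedding of terms of the second theory into the sum signature. -/
def Term.inR {A B : Signature} {V : Type} : Term B V → Term (A.sum B) V
  | .var v => .var v
  | .op o ts => .op (Sum.inr o) (fun i => (ts i).inR)

/-- A closed term, regarded as a term over any variable set. -/
def Term.ofClosed {Sg : Signature} {V : Type} (t : Term Sg Empty) : Term Sg V :=
  t.rename (fun x => x.elim)

/-- A candidate composite theory of `S` and `T`: a theory over the disjoint
union of the two signatures. -/
structure Composite (S T : Theory) where
  Ax : Term (S.sig.sum T.sig) Nat → Term (S.sig.sum T.sig) Nat → Prop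

def Composite.U {S T : Theory} (C : Composite S T) : Theory := ⟨S.sig.sum T.sig, C.Ax⟩

/-- A separated term: a `T`-term with `S`-terms substituted for its variables. -/
def sep {S T : Theory} {V : Type} (t : Term T.sig Nat) (σ : Nat → Term S.sig V) :
    Term (S.sig.sum T.sig) V :=
  (Term.inR (A := S.sig) t).subst (fun n => Term.inL (σ n))

/-- `C` is a composite theory of `S` and `T` in the sense of Pirog–Staton:
it contains both theories, and satisfies separation and essential uniqueness. -/
structure IsComposite {S T : Theory} (C : Composite S T) : Prop where
  containsS : ∀ {V : Type} (s s' : Term S.sig V), S.Eq s s' → C.U.Eq s.inL s'.inL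
  containsT : ∀ {V : Type} (t t' : Term T.sig V), T.Eq t t' → C.U.Eq t.inR t'.inR
  separation : ∀ {V : Type} (u : Term (S.sig.sum T.sig) V),
      ∃ (t : Term T.sig Nat) (σ : Nat → Term S.sig V), C.U.Eq u (sep t σ)
  essUniq : ∀ {V : Type} (t t' : Term T.sig Nat) (σ σ' : Nat → Term S.sig V),
      C.U.Eq (sep t σ) (sep t' σ') →
      ∃ (Z : Type) (f g : Nat → Z),
        T.Eq (t.rename f) (t'.rename g) ∧
        (∀ i j, f i = f j ↔ S.Eq (σ i) (σ j)) ∧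
        (∀ i j, g i = g j ↔ S.Eq (σ' i) (σ' j)) ∧
        (∀ i j, f i = g j ↔ S.Eq (σ i) (σ' j))

/-- Property: any term provably equal to a variable-free term is variable-free. -/
def VarFree0 (T : Theory) : Prop :=
  ∀ (V : Type) (t t' : Term T.sig V), t.fv = ∅ → T.Eq t t' → t'.fv = ∅

/-- Property: any term provably equal to a variable `x` has free variables `⊆ {x}`. -/
def VarSingle (T : Theory) : Prop :=
  ∀ (V : Type) (x : V) (t : Term T.sig V), T.Eq t (.var x) → t.fv ⊆ {x}

/-- Property: every operation of positive arity has a unit constant. -/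
def HasUnits (S : Theory) : Prop :=
  ∀ o : S.sig.Op, 1 ≤ S.sig.ar o →
    ∃ e : Term S.sig Empty, ∀ k : Fin (S.sig.ar o),
      S.Eq (.op o (fun i => if i = k then .var (0 : Nat) else e.ofClosed)) (.var 0)

/-- Application of a term with (at most) free variables `0, 1` to two arguments. -/
def app2 {Sg : Signature} {V : Type} (t : Term Sg Nat) (A B : Term Sg V) : Term Sg V :=
  t.subst (fun n => if n = 0 then A else B)

/-! ### Auxiliary lemmas -/

theorem Term.subst_subst {Sg : Signature} {V W X : Type} (t : Term Sg V)
    (f : V → Term Sg W) (g : W → Term Sg X) :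
    (t.subst f).subst g = t.subst (fun v => (f v).subst g) := by
  induction t with
  | var v => rfl
  | op o ts ih => simp only [Term.subst]; exact congrArg _ (funext fun i => ih i)

theorem Term.inL_subst {A B : Signature} {V W : Type} (t : Term A V) (f : V → Term A W) :
    (Term.inL (B := B) t).subst (fun v => (f v).inL) = (t.subst f).inL := by
  induction t with
  | var v => rfl
  | op o ts ih => simp only [Term.inL, Term.subst]; exact congrArg _ (funext fun i => ih i)

theorem Term.inR_subst {A B : Signature} {V W : Type} (t : Term B V) (f : V → Term B W) :
    (Term.inR (A := A) t).subst (fun v => (f v).inR) = (t.subst f).inR := by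
  induction t with
  | var v => rfl
  | op o ts ih => simp only [Term.inR, Term.subst]; exact congrArg _ (funext fun i => ih i)

theorem Term.ofClosed_subst {Sg : Signature} {V W : Type} (t : Term Sg Empty)
    (f : V → Term Sg W) :
    (Term.ofClosed (V := V) t).subst f = Term.ofClosed t := by
  induction t with
  | var v => exact v.elim
  | op o ts ih =>
    simp only [Term.ofClosed, Term.rename, Term.subst] at *
    exact congrArg _ (funext fun i => ih i)

theorem Term.inR_ofClosed {A B : Signature} {V : Type} (t : Term B Empty) :
    (Term.ofClosed (V := V) t).inR = Term.ofClosed (Term.inR (A := A) t) := by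
  induction t with
  | var v => exact v.elim
  | op o ts ih =>
    simp only [Term.ofClosed, Term.rename, Term.subst, Term.inR] at *
    exact congrArg _ (funext fun i => ih i)

theorem Term.inL_ofClosed {A B : Signature} {V : Type} (t : Term A Empty) :
    (Term.ofClosed (V := V) t).inL = Term.ofClosed (Term.inL (B := B) t) := by
  induction t with
  | var v => exact v.elim
  | op o ts ih =>
    simp only [Term.ofClosed, Term.rename, Term.subst, Term.inL] at *
    exact congrArg _ (funext fun i => ih i)

theorem Term.fv_ofClosed {Sg : Signature} {V : Type} (t : Term Sg Empty) :
    (Term.ofClosed (V := V) t).fv = ∅ := by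
  induction t with
  | var v => exact v.elim
  | op o ts ih =>
    simp only [Term.ofClosed, Term.rename, Term.subst, Term.fv] at *
    exact Set.iUnion_eq_empty.2 fun i => ih i

theorem Term.fv_inR {A B : Signature} {V : Type} (t : Term B V) :
    (Term.inR (A := A) t).fv = t.fv := by
  induction t with
  | var v => rfl
  | op o ts ih =>
    simp only [Term.inR, Term.fv]
    exact congrArg _ (funext fun i => ih i)

theorem Term.fv_empty_of_rename {Sg : Signature} {V W : Type} {f : V → W} {t : Term Sg V}
    (h : (t.rename f).fv = ∅) : t.fv = ∅ := by
  induction t with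
  | var v =>
    exact absurd h (by simp [Term.rename, Term.subst, Term.fv])
  | op o ts ih =>
    simp only [Term.rename, Term.subst, Term.fv, Set.iUnion_eq_empty] at *
    exact fun i => ih i (h i)

theorem Term.subst_congr_of_fv_empty {Sg : Signature} {V W : Type} {t : Term Sg V}
    (h : t.fv = ∅) (f g : V → Term Sg W) : t.subst f = t.subst g := by
  induction t with
  | var v => exact absurd h (by simp [Term.fv])
  | op o ts ih =>
    simp only [Term.fv, Set.iUnion_eq_empty] at h
    simp only [Term.subst]
    exact congrArg _ (funext fun i => ih i (h i))

/-- The constant `e`, viewed over variables `V`. -/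
private def eV (S T : Theory) (e : Term T.sig Empty) (V : Type) : Term (S.sig.sum T.sig) V :=
  (Term.ofClosed (V := V) e).inR

theorem eV_subst (S T : Theory) (e : Term T.sig Empty) {V W : Type}
    (f : V → Term (S.sig.sum T.sig) W) : (eV S T e V).subst f = eV S T e W := by
  simp only [eV, Term.inR_ofClosed, Term.ofClosed_subst]

/-- The key lemma: `e` absorbs any `S`-operation with a unit, over any arguments. -/
theorem opZero (S T : Theory) (hT0 : VarFree0 T) (e : Term T.sig Empty)
    (C : Composite S T) (hC : IsComposite C) (o : S.sig.Op) (j : Fin (S.sig.ar o))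
    (c : Term S.sig Empty)
    (hc : S.Eq (.op o (fun i => if i = j then .var (0 : Nat) else c.ofClosed)) (.var 0))
    (V : Type) (B : Fin (S.sig.ar o) → Term (S.sig.sum T.sig) V) :
    C.U.Eq (.op (Sum.inl o) (fun (i : Fin (S.sig.ar o)) => if i = j then eV S T e V else B i)) (eV S T e V) := by
  set cL : Term (S.sig.sum T.sig) Nat := (Term.ofClosed (V := Nat) c).inL with hcL
  have hcLc : ∀ (f : Nat → Term (S.sig.sum T.sig) Nat), cL.subst f = cL := by
    intro f
    simp only [hcL, Term.inL_ofClosed, Term.ofClosed_subst]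
  -- the LHS over variables ℕ
  set P : Term (S.sig.sum T.sig) Nat :=
    .op (Sum.inl o) (fun (i : Fin (S.sig.ar o)) => if i = j then eV S T e Nat else .var (i : Nat)) with hP
  -- the "all units" version
  set Q : Term (S.sig.sum T.sig) Nat :=
    .op (Sum.inl o) (fun (i : Fin (S.sig.ar o)) => if i = j then eV S T e Nat else cL) with hQ
  -- step 1: Q = e in U, from the unit law of S
  have h1 : C.U.Eq Q (eV S T e Nat) := by
    have hU := hC.containsS _ _ hc
    have hU2 := Theory.Eq.subst (fun _ => eV S T e Nat) hU
    have lhsEq : ((Term.inL (B := T.sig)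
        (.op o (fun i => if i = j then .var (0 : Nat) else c.ofClosed))).subst
          (fun _ => eV S T e Nat)) = Q := by
      simp only [Term.inL, Term.subst, hQ]
      refine congrArg _ (funext fun (i : Fin (S.sig.ar o)) => ?_)
      by_cases h : i = j <;> simp [h, Term.inL, Term.subst, hcL, Term.inL_ofClosed, Term.ofClosed_subst]
    erw [lhsEq] at hU2
    exact hU2
  -- step 2: separate P
  obtain ⟨t, σ, hsep⟩ := hC.separation P
  -- substitute c everywhere
  have h2 := Theory.Eq.subst (fun _ => cL) hsep
  have hPQ : P.subst (fun _ => cL) = Q := by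
    simp only [hP, hQ, Term.subst]
    refine congrArg _ (funext fun (i : Fin (S.sig.ar o)) => ?_)
    by_cases h : i = j <;> simp [h, Term.subst, eV_subst, hcLc]
  have hsepEq : (sep t σ).subst (fun _ => cL) =
      sep t (fun n => (σ n).subst (fun _ => Term.ofClosed (V := Nat) c)) := by
    simp only [sep, Term.subst_subst]
    refine congrArg _ (funext fun n => ?_)
    have := Term.inL_subst (B := T.sig) (σ n) (fun _ => Term.ofClosed (V := Nat) c)
    simpa [hcL] using this
  erw [hPQ, hsepEq] at h2
  -- e itself is a separated term
  have heSep : eV S T e Nat = sep (Term.ofClosed (V := Nat) e) (fun _ => Term.ofClosed (V := Nat) c) := by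
    simp only [sep, eV, Term.inR_ofClosed, Term.ofClosed_subst]
  -- combine: sep t σ'' = sep (e) (...)
  have h3 : C.U.Eq (sep t (fun n => (σ n).subst (fun _ => Term.ofClosed (V := Nat) c)))
      (sep (Term.ofClosed (V := Nat) e) (fun _ => Term.ofClosed (V := Nat) c)) := by
    rw [← heSep]
    exact h2.symm.trans h1
  -- essential uniqueness
  obtain ⟨Z, f, g, hT, -, -, -⟩ := hC.essUniq _ _ _ _ h3
  have hefv : ((Term.ofClosed (V := Nat) e).rename g).fv = ∅ := by
    have : (Term.ofClosed (V := Nat) e).rename g = Term.ofClosed (V := Z) e := by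
      simp only [Term.rename, Term.ofClosed_subst]
    rw [this]; exact Term.fv_ofClosed e
  have htfv : t.fv = ∅ :=
    Term.fv_empty_of_rename (hT0 Z _ _ hefv hT.symm)
  -- hence sep t σ does not depend on σ
  have hsame : sep t σ = sep t (fun n => (σ n).subst (fun _ => Term.ofClosed (V := Nat) c)) := by
    simp only [sep]
    exact Term.subst_congr_of_fv_empty (by rw [Term.fv_inR]; exact htfv) _ _
  -- so P = e over ℕ
  have hPe : C.U.Eq P (eV S T e Nat) := by
    refine hsep.trans ?_
    rw [hsame]
    exact h2.symm.trans h1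
  -- now substitute the B's
  have h4 := Theory.Eq.subst
    (fun n => if h : n < S.sig.ar o then B ⟨n, h⟩ else eV S T e V) hPe
  have hfinal : P.subst (fun n => if h : n < S.sig.ar o then B ⟨n, h⟩ else eV S T e V) =
      .op (Sum.inl o) (fun (i : Fin (S.sig.ar o)) => if i = j then eV S T e V else B i) := by
    simp only [hP, Term.subst]
    refine congrArg _ (funext fun (i : Fin (S.sig.ar o)) => ?_)
    by_cases h : i = j
    · simp [h, eV_subst]
    · simp only [if_neg h]
      show (if h : (i : Nat) < S.sig.ar o then B ⟨i, h⟩ else eV S T e V) = B i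
      have hi : (i : Nat) < S.sig.ar o := i.isLt
      rw [dif_pos hi]
  erw [hfinal, eV_subst] at h4
  exact h4

/-- **Multiplicative zero theorem.** Suppose every positive-arity operation of `𝕊`
has a unit constant, and in `𝕋` any term equal to a variable-free term is
variable-free, with `e` a constant (closed term) of `𝕋`. Then in any composite
theory `𝕌` of `𝕊` and `𝕋`, any `𝕊`-term `s` with at least one free variable, with
`e` substituted for one of its free variables (and arbitrary `𝕌`-terms for the
others), is equal to `e` in `𝕌`. -/
theorem composite_multiplicative_zero (S T : Theory)
    (hS : HasUnits S) (hT0 : VarFree0 T) (e : Term T.sig Empty)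
    (C : Composite S T) (hC : IsComposite C) :
    ∀ (V : Type) (s : Term S.sig Nat) (k : Nat), k ∈ s.fv →
      ∀ u : Nat → Term (S.sig.sum T.sig) V, u k = (Term.ofClosed (V := V) e).inR →
        C.U.Eq ((s.inL).subst u) ((Term.ofClosed (V := V) e).inR) := by
  intro V s
  induction s with
  | var v =>
    intro k hk u hu
    simp only [Term.fv, Set.mem_singleton_iff] at hk
    subst hk
    simpa only [Term.inL, Term.subst, hu] using Theory.Eq.refl _
  | op o ts ih =>
    intro k hk u hu
    simp only [Term.fv, Set.mem_iUnion] at hk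
    obtain ⟨j, hj⟩ := hk
    obtain ⟨c, hc⟩ := hS o j.pos
    have IH : C.U.Eq ((ts j).inL.subst u) ((Term.ofClosed (V := V) e).inR) :=
      ih j k hj u hu
    have step1 : C.U.Eq ((Term.op o ts).inL.subst u)
        (.op (Sum.inl o) (fun (i : Fin (S.sig.ar o)) => if i = j then eV S T e V else (ts i).inL.subst u)) := by
      simp only [Term.inL, Term.subst]
      refine Theory.Eq.congr (T := C.U) (Sum.inl o) fun (i : Fin (S.sig.ar o)) => ?_
      by_cases h : i = j
      · subst h; simpa [eV] using IH
      · erw [if_neg h]; exact Theory.Eq.refl _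
    have step2 := opZero S T hT0 e C hC o j c (hc j) V (fun i => (ts i).inL.subst u)
    exact step1.trans step2
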